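/- With G as above, let V = rowspace(V_1 | V_2) with V_1 ∈ F_q^{(k+1)×k}, V_2 ∈ F_q^{(k+1)×(k+1)} and rk(V_1 | V_2) = k+1, where k > 1. Then the orbit code Orb_G(V) ⊆ G_q(k+1, 2k+1) attains the maximum distance 2k (equivalently dim(V ∩ V·g) = 1 for every g ∈ G not stabilizing V, and the stabilizer is trivial) if and only if rk(V_1) = k and rk(V_2) = k+1. -/

import Mathlib

open Module

/-- The subspace distance `d_S(U,V) = dim(U+V) - dim(U∩V)`. -/
noncomputable def dS {K V : Type*} [Field K] [AddCommGroup V] [Module K V]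
    (U W : Submodule K V) : ℕ :=
  finrank K ↥(U ⊔ W) - finrank K ↥(U ⊓ W)

/-- The companion matrix of a (monic, degree `k+1`) polynomial `p`. -/
def companion {K : Type*} [Field K] {k : ℕ} (p : Polynomial K) :
    Matrix (Fin (k + 1)) (Fin (k + 1)) K :=
  Matrix.of fun i j =>
    if (i : ℕ) = k then -p.coeff (j : ℕ) else if (i : ℕ) + 1 = (j : ℕ) then 1 else 0

/-- The element `rowspace(V_1 | V_2 M^i)` of the orbit of `rowspace(V_1 | V_2)` under
`G = {diag(I_k, M^i)}`, inside `F_q^{2k+1} = F_q^k × F_q^{k+1}`. -/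
def spV {K : Type*} [Field K] {k : ℕ}
    (V1 : Matrix (Fin (k + 1)) (Fin k) K) (V2 : Matrix (Fin (k + 1)) (Fin (k + 1)) K)
    (M : Matrix (Fin (k + 1)) (Fin (k + 1)) K) (i : ℕ) :
    Submodule K (Fin k ⊕ Fin (k + 1) → K) :=
  Submodule.span K (Set.range fun r => Sum.elim (V1 r) (Matrix.vecMul (V2 r) (M ^ i)))

namespace StmtAux

open Matrix

variable {K : Type*} [Field K] {k : ℕ}

/-- The combined matrix `(V1 | V2 M^i)`. -/
def B (V1 : Matrix (Fin (k + 1)) (Fin k) K) (V2 M : Matrix (Fin (k + 1)) (Fin (k + 1)) K)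
    (i : ℕ) : Matrix (Fin (k + 1)) (Fin k ⊕ Fin (k + 1)) K :=
  Matrix.of fun r => Sum.elim (V1 r) ((V2 * M ^ i) r)

theorem vecMul_B (V1 : Matrix (Fin (k + 1)) (Fin k) K)
    (V2 M : Matrix (Fin (k + 1)) (Fin (k + 1)) K) (i : ℕ) (x : Fin (k + 1) → K) :
    x ᵥ* B V1 V2 M i = Sum.elim (x ᵥ* V1) (x ᵥ* (V2 * M ^ i)) := by
  funext j
  cases j with
  | inl a => simp [B, Matrix.vecMul, dotProduct]
  | inr b => simp [B, Matrix.vecMul, dotProduct]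

theorem spV_eq (V1 : Matrix (Fin (k + 1)) (Fin k) K)
    (V2 M : Matrix (Fin (k + 1)) (Fin (k + 1)) K) (i : ℕ) :
    spV V1 V2 M i = LinearMap.range (B V1 V2 M i).vecMulLinear := by
  have hfun : (fun r => Sum.elim (V1 r) (Matrix.vecMul (V2 r) (M ^ i))) = B V1 V2 M i := by
    funext r j
    cases j with
    | inl a => rfl
    | inr b => simp [B, Matrix.mul_apply, Matrix.vecMul, dotProduct]
  rw [spV, range_vecMulLinear, hfun]
  rfl

theorem mem_spV {V1 : Matrix (Fin (k + 1)) (Fin k) K}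
    {V2 M : Matrix (Fin (k + 1)) (Fin (k + 1)) K} {i : ℕ} (v : Fin k ⊕ Fin (k + 1) → K) :
    v ∈ spV V1 V2 M i ↔ ∃ x : Fin (k + 1) → K,
      Sum.elim (x ᵥ* V1) (x ᵥ* (V2 * M ^ i)) = v := by
  rw [spV_eq]
  constructor
  · rintro ⟨x, rfl⟩
    exact ⟨x, (vecMul_B V1 V2 M i x).symm⟩
  · rintro ⟨x, rfl⟩
    exact ⟨x, vecMul_B V1 V2 M i x⟩

theorem rank_eq_finrank {m n : Type*} [Fintype n] (A : Matrix m n K) :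
    A.rank = finrank K ↥(LinearMap.range A.mulVecLin) := rfl

theorem vecMul_inj_of_rank {m : ℕ} {ι : Type*} [Fintype ι] [DecidableEq ι]
    (A : Matrix (Fin m) ι K) (h : A.rank = m) :
    ∀ x : Fin m → K, x ᵥ* A = 0 → x = 0 := by
  intro x hx
  have h1 := LinearMap.finrank_range_add_finrank_ker (Aᵀ.mulVecLin)
  have h2 : finrank K ↥(LinearMap.range Aᵀ.mulVecLin) = m := by
    rw [← rank_eq_finrank, Matrix.rank_transpose, h]
  have hd : finrank K (Fin m → K) = m := by simp
  rw [h2, hd] at h1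
  have hker0 : finrank K ↥(LinearMap.ker Aᵀ.mulVecLin) = 0 := by omega
  have hbot := Submodule.finrank_eq_zero.mp hker0
  have hmem : x ∈ LinearMap.ker Aᵀ.mulVecLin := by
    rw [LinearMap.mem_ker, Matrix.mulVecLin_apply, Matrix.mulVec_transpose, hx]
  rw [hbot, Submodule.mem_bot] at hmem
  exact hmem

theorem isUnit_of_rank_eq {n : ℕ} (A : Matrix (Fin n) (Fin n) K) (h : A.rank = n) :
    IsUnit A := by
  rw [← Matrix.vecMul_injective_iff_isUnit]
  intro a b hab
  have h0 : (a - b) ᵥ* A = 0 := by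
    rw [Matrix.sub_vecMul]
    rw [show a ᵥ* A = b ᵥ* A from hab, sub_self]
  have := vecMul_inj_of_rank A h _ h0
  exact sub_eq_zero.mp this

section Main

variable (V1 : Matrix (Fin (k + 1)) (Fin k) K) (V2 M : Matrix (Fin (k + 1)) (Fin (k + 1)) K)

theorem B_inj
    (hB0 : ∀ x : Fin (k + 1) → K, x ᵥ* B V1 V2 M 0 = 0 → x = 0)
    (hMu : IsUnit M) (i : ℕ) :
    ∀ x : Fin (k + 1) → K, x ᵥ* B V1 V2 M i = 0 → x = 0 := by
  intro x hx
  rw [vecMul_B] at hx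
  have h1 : x ᵥ* V1 = 0 := funext fun a => congrFun hx (Sum.inl a)
  have h2 : x ᵥ* (V2 * M ^ i) = 0 := funext fun b => congrFun hx (Sum.inr b)
  have h3 : x ᵥ* V2 = 0 := by
    have hMiu : IsUnit (M ^ i) := hMu.pow i
    have hinj := Matrix.vecMul_injective_iff_isUnit.mpr hMiu
    apply hinj
    rw [← Matrix.vecMul_vecMul] at h2
    show (x ᵥ* V2) ᵥ* (M ^ i) = (0 : Fin (k+1) → K) ᵥ* (M ^ i)
    rw [h2, Matrix.zero_vecMul]
  apply hB0 x
  rw [vecMul_B]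
  funext j
  cases j with
  | inl a => simpa using congrFun h1 a
  | inr b =>
    have : x ᵥ* (V2 * M ^ 0) = 0 := by rw [pow_zero, mul_one, h3]
    simpa using congrFun this b

theorem finrank_spV
    (hB0 : ∀ x : Fin (k + 1) → K, x ᵥ* B V1 V2 M 0 = 0 → x = 0)
    (hMu : IsUnit M) (i : ℕ) :
    finrank K ↥(spV V1 V2 M i) = k + 1 := by
  rw [spV_eq]
  have hinj : Function.Injective (B V1 V2 M i).vecMulLinear := by
    rw [← LinearMap.ker_eq_bot, LinearMap.ker_eq_bot']
    intro x hx
    exact B_inj V1 V2 M hB0 hMu i x hx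
  rw [LinearMap.finrank_range_of_inj hinj]
  simp

theorem finrank_amb : finrank K (Fin k ⊕ Fin (k + 1) → K) = 2 * k + 1 := by
  rw [Module.finrank_pi]
  simp
  omega

theorem upper
    (hB0 : ∀ x : Fin (k + 1) → K, x ᵥ* B V1 V2 M 0 = 0 → x = 0)
    (hMu : IsUnit M) (hV1 : V1.rank = k) (hV2 : IsUnit V2)
    {i j : ℕ} (hD : IsUnit (M ^ j - M ^ i)) :
    finrank K ↥(spV V1 V2 M i ⊓ spV V1 V2 M j) ≤ 1 := by
  classical
  set D := M ^ j - M ^ i with hDdef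
  have hDdet : IsUnit D.det := (Matrix.isUnit_iff_isUnit_det D).mp hD
  have hV2det : IsUnit V2.det := (Matrix.isUnit_iff_isUnit_det V2).mp hV2
  set C := V2 * M ^ j * D⁻¹ * V2⁻¹ with hCdef
  set U := LinearMap.ker (V1ᵀ.mulVecLin) with hUdef
  set Φ := (B V1 V2 M i).vecMulLinear ∘ₗ C.vecMulLinear with hPhi
  have hle : spV V1 V2 M i ⊓ spV V1 V2 M j ≤ Submodule.map Φ U := by
    rintro v ⟨hvi, hvj⟩
    obtain ⟨x, hx⟩ := (mem_spV v).mp hvi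
    obtain ⟨z, hz⟩ := (mem_spV v).mp hvj
    have h1 : x ᵥ* V1 = z ᵥ* V1 :=
      funext fun a => (congrFun hx (Sum.inl a)).trans (congrFun hz (Sum.inl a)).symm
    have h2 : x ᵥ* (V2 * M ^ i) = z ᵥ* (V2 * M ^ j) :=
      funext fun b => (congrFun hx (Sum.inr b)).trans (congrFun hz (Sum.inr b)).symm
    refine ⟨x - z, ?_, ?_⟩
    · show V1ᵀ *ᵥ (x - z) = 0
      rw [Matrix.mulVec_transpose, Matrix.sub_vecMul, h1, sub_self]
    · have e1 : (x - z) ᵥ* (V2 * M ^ j) = x ᵥ* (V2 * D) := by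
        rw [Matrix.sub_vecMul, hDdef, Matrix.mul_sub, Matrix.vecMul_sub, ← h2]
      have e2 : (V2 * D) * (D⁻¹ * V2⁻¹) = 1 := by
        rw [Matrix.mul_assoc V2 D _, ← Matrix.mul_assoc D D⁻¹ V2⁻¹,
          Matrix.mul_nonsing_inv D hDdet, one_mul, Matrix.mul_nonsing_inv V2 hV2det]
      have hkey : (x - z) ᵥ* C = x := by
        calc (x - z) ᵥ* C = ((x - z) ᵥ* (V2 * M ^ j)) ᵥ* (D⁻¹ * V2⁻¹) := by
              rw [Matrix.vecMul_vecMul, hCdef, Matrix.mul_assoc (V2 * M ^ j) D⁻¹ V2⁻¹]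
        _ = (x ᵥ* (V2 * D)) ᵥ* (D⁻¹ * V2⁻¹) := by rw [e1]
        _ = x ᵥ* ((V2 * D) * (D⁻¹ * V2⁻¹)) := Matrix.vecMul_vecMul x _ _
        _ = x := by rw [e2, Matrix.vecMul_one]
      show Φ (x - z) = v
      rw [hPhi]
      simp only [LinearMap.comp_apply, Matrix.vecMulLinear_apply]
      rw [hkey, vecMul_B, hx]
  have h4 : finrank K ↥(Submodule.map Φ U) ≤ finrank K ↥U := Submodule.finrank_map_le Φ U
  have h5 : finrank K ↥U = 1 := by
    have h1 := LinearMap.finrank_range_add_finrank_ker (V1ᵀ.mulVecLin)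
    have h2 : finrank K ↥(LinearMap.range (V1ᵀ.mulVecLin)) = k := by
      rw [← rank_eq_finrank, Matrix.rank_transpose, hV1]
    have h3 : finrank K (Fin (k + 1) → K) = k + 1 := by simp
    rw [h2, h3, ← hUdef] at h1
    omega
  calc finrank K ↥(spV V1 V2 M i ⊓ spV V1 V2 M j)
      ≤ finrank K ↥(Submodule.map Φ U) := Submodule.finrank_mono hle
  _ ≤ finrank K ↥U := h4
  _ = 1 := h5

theorem lowerU
    (hB0 : ∀ x : Fin (k + 1) → K, x ᵥ* B V1 V2 M 0 = 0 → x = 0)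
    (hMu : IsUnit M) (hV2 : IsUnit V2) {i : ℕ} (hD : IsUnit (M ^ i - 1)) :
    k + 1 - V1.rank ≤ finrank K ↥(spV V1 V2 M 0 ⊓ spV V1 V2 M i) := by
  classical
  set D := M ^ i - 1 with hDdef
  have hDdet : IsUnit D.det := (Matrix.isUnit_iff_isUnit_det D).mp hD
  have hV2det : IsUnit V2.det := (Matrix.isUnit_iff_isUnit_det V2).mp hV2
  set C := V2 * M ^ i * D⁻¹ * V2⁻¹ with hCdef
  set U := LinearMap.ker (V1ᵀ.mulVecLin) with hUdef
  set Φ := (B V1 V2 M 0).vecMulLinear ∘ₗ C.vecMulLinear with hPhi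
  have hCV2D : C * (V2 * D) = V2 * M ^ i := by
    have e1 : V2⁻¹ * (V2 * D) = D := by
      rw [← Matrix.mul_assoc, Matrix.nonsing_inv_mul V2 hV2det, one_mul]
    calc C * (V2 * D) = V2 * M ^ i * (D⁻¹ * (V2⁻¹ * (V2 * D))) := by
          simp only [hCdef, Matrix.mul_assoc]
    _ = V2 * M ^ i := by rw [e1, Matrix.nonsing_inv_mul D hDdet, Matrix.mul_one]
  have hPhiApp : ∀ u : Fin (k + 1) → K, Φ u = (u ᵥ* C) ᵥ* B V1 V2 M 0 := by
    intro u
    rw [hPhi]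
    simp only [LinearMap.comp_apply, Matrix.vecMulLinear_apply]
  have hmem : ∀ u ∈ U, Φ u ∈ spV V1 V2 M 0 ⊓ spV V1 V2 M i := by
    intro u hu
    have hu1 : u ᵥ* V1 = 0 := by
      rw [← Matrix.mulVec_transpose]
      exact LinearMap.mem_ker.mp hu
    have hxD : (u ᵥ* C) ᵥ* (V2 * D) = u ᵥ* (V2 * M ^ i) := by
      rw [Matrix.vecMul_vecMul, hCV2D]
    constructor
    · exact (mem_spV _).mpr ⟨u ᵥ* C, by rw [← vecMul_B, ← hPhiApp]⟩
    · refine (mem_spV _).mpr ⟨u ᵥ* C - u, ?_⟩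
      rw [hPhiApp, vecMul_B]
      have ha : (u ᵥ* C - u) ᵥ* V1 = (u ᵥ* C) ᵥ* V1 := by
        rw [Matrix.sub_vecMul, hu1, sub_zero]
      have hb : (u ᵥ* C - u) ᵥ* (V2 * M ^ i) = (u ᵥ* C) ᵥ* (V2 * M ^ 0) := by
        rw [Matrix.sub_vecMul, ← hxD, ← Matrix.vecMul_sub, ← Matrix.mul_sub,
          sub_sub_cancel, pow_zero]
      rw [ha, hb]
  have hCu : IsUnit C := by
    have hDinv : IsUnit D⁻¹ :=
      IsUnit.of_mul_eq_one D (Matrix.nonsing_inv_mul D hDdet)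
    have hV2inv : IsUnit V2⁻¹ :=
      IsUnit.of_mul_eq_one V2 (Matrix.nonsing_inv_mul V2 hV2det)
    exact ((hV2.mul (hMu.pow i)).mul hDinv).mul hV2inv
  have hPhiInj : Function.Injective Φ := by
    rw [← LinearMap.ker_eq_bot, LinearMap.ker_eq_bot']
    intro x hx
    rw [hPhiApp] at hx
    have h1 : x ᵥ* C = 0 := hB0 _ hx
    have hinj := Matrix.vecMul_injective_iff_isUnit.mpr hCu
    apply hinj
    show x ᵥ* C = (0 : Fin (k + 1) → K) ᵥ* C
    rw [h1, Matrix.zero_vecMul]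
  have hUfr : finrank K ↥U = k + 1 - V1.rank := by
    have h1 := LinearMap.finrank_range_add_finrank_ker (V1ᵀ.mulVecLin)
    have h2 : finrank K ↥(LinearMap.range (V1ᵀ.mulVecLin)) = V1.rank := by
      rw [← rank_eq_finrank, Matrix.rank_transpose]
    have h3 : finrank K (Fin (k + 1) → K) = k + 1 := by simp
    have h4 : V1.rank ≤ k + 1 := by
      have := Matrix.rank_le_card_height V1
      simpa using this
    rw [h2, h3, ← hUdef] at h1
    omega
  rw [← hUfr]
  apply LinearMap.finrank_le_finrank_of_injective
    (f := (Φ.comp U.subtype).codRestrict (spV V1 V2 M 0 ⊓ spV V1 V2 M i)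
      (fun u => by simpa [LinearMap.comp_apply] using hmem u.1 u.2))
  rw [← LinearMap.ker_eq_bot, LinearMap.ker_codRestrict, LinearMap.ker_eq_bot]
  exact hPhiInj.comp (Submodule.injective_subtype U)

theorem lowerW
    (hB0 : ∀ x : Fin (k + 1) → K, x ᵥ* B V1 V2 M 0 = 0 → x = 0)
    (i : ℕ) :
    k + 1 - V2.rank ≤ finrank K ↥(spV V1 V2 M 0 ⊓ spV V1 V2 M i) := by
  classical
  set W := LinearMap.ker (V2ᵀ.mulVecLin) with hWdef
  set Φ := (B V1 V2 M 0).vecMulLinear with hPhi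
  have hmem : ∀ w ∈ W, Φ w ∈ spV V1 V2 M 0 ⊓ spV V1 V2 M i := by
    intro w hw
    have hw2 : w ᵥ* V2 = 0 := by
      rw [← Matrix.mulVec_transpose]
      exact LinearMap.mem_ker.mp hw
    have hz : ∀ n : ℕ, w ᵥ* (V2 * M ^ n) = 0 := by
      intro n
      rw [← Matrix.vecMul_vecMul, hw2, Matrix.zero_vecMul]
    constructor
    · exact (mem_spV _).mpr ⟨w, by rw [← vecMul_B, hPhi, Matrix.vecMulLinear_apply]⟩
    · refine (mem_spV _).mpr ⟨w, ?_⟩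
      rw [hPhi, Matrix.vecMulLinear_apply, vecMul_B, hz i, hz 0]
  have hPhiInj : Function.Injective Φ := by
    rw [← LinearMap.ker_eq_bot, LinearMap.ker_eq_bot']
    intro x hx
    exact hB0 _ hx
  have hWfr : finrank K ↥W = k + 1 - V2.rank := by
    have h1 := LinearMap.finrank_range_add_finrank_ker (V2ᵀ.mulVecLin)
    have h2 : finrank K ↥(LinearMap.range (V2ᵀ.mulVecLin)) = V2.rank := by
      rw [← rank_eq_finrank, Matrix.rank_transpose]
    have h3 : finrank K (Fin (k + 1) → K) = k + 1 := by simp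
    have h4 : V2.rank ≤ k + 1 := by
      have := Matrix.rank_le_card_height V2
      simpa using this
    rw [h2, h3, ← hWdef] at h1
    omega
  rw [← hWfr]
  apply LinearMap.finrank_le_finrank_of_injective
    (f := (Φ.comp W.subtype).codRestrict (spV V1 V2 M 0 ⊓ spV V1 V2 M i)
      (fun w => by simpa [LinearMap.comp_apply] using hmem w.1 w.2))
  rw [← LinearMap.ker_eq_bot, LinearMap.ker_codRestrict, LinearMap.ker_eq_bot]
  exact hPhiInj.comp (Submodule.injective_subtype W)

theorem lowerB
    (hB0 : ∀ x : Fin (k + 1) → K, x ᵥ* B V1 V2 M 0 = 0 → x = 0)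
    (hMu : IsUnit M) {i : ℕ} (u w x : Fin (k + 1) → K)
    (hu1 : u ᵥ* V1 = 0) (hu0 : u ≠ 0) (hw2 : w ᵥ* V2 = 0) (hw0 : w ≠ 0)
    (hx : x ᵥ* (V2 * (M ^ i - 1)) = u ᵥ* (V2 * M ^ i)) :
    2 ≤ finrank K ↥(spV V1 V2 M 0 ⊓ spV V1 V2 M i) := by
  classical
  set v1 := w ᵥ* B V1 V2 M 0 with hv1
  set v2 := x ᵥ* B V1 V2 M 0 with hv2
  have hz : ∀ n : ℕ, w ᵥ* (V2 * M ^ n) = 0 := by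
    intro n
    rw [← Matrix.vecMul_vecMul, hw2, Matrix.zero_vecMul]
  have h1 : v1 ∈ spV V1 V2 M 0 ⊓ spV V1 V2 M i := by
    constructor
    · exact (mem_spV _).mpr ⟨w, by rw [← vecMul_B]⟩
    · refine (mem_spV _).mpr ⟨w, ?_⟩
      rw [hv1, vecMul_B, hz i, hz 0]
  have h2 : v2 ∈ spV V1 V2 M 0 ⊓ spV V1 V2 M i := by
    constructor
    · exact (mem_spV _).mpr ⟨x, by rw [← vecMul_B]⟩
    · refine (mem_spV _).mpr ⟨x - u, ?_⟩
      rw [hv2, vecMul_B]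
      have ha : (x - u) ᵥ* V1 = x ᵥ* V1 := by
        rw [Matrix.sub_vecMul, hu1, sub_zero]
      have hb : (x - u) ᵥ* (V2 * M ^ i) = x ᵥ* (V2 * M ^ 0) := by
        rw [Matrix.sub_vecMul, ← hx, ← Matrix.vecMul_sub, ← Matrix.mul_sub,
          sub_sub_cancel, pow_zero]
      rw [ha, hb]
  have hind : LinearIndependent K ![v1, v2] := by
    rw [LinearIndependent.pair_iff]
    intro s t hst
    have hsw : (s • w + t • x) ᵥ* B V1 V2 M 0 = 0 := by
      rw [Matrix.add_vecMul, Matrix.smul_vecMul, Matrix.smul_vecMul, ← hv1, ← hv2]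
      exact hst
    have hswx : s • w + t • x = 0 := hB0 _ hsw
    have ht : t = 0 := by
      by_contra ht0
      have hxV2 : x ᵥ* V2 = 0 := by
        have e1 : (s • w + t • x) ᵥ* V2 = 0 := by rw [hswx, Matrix.zero_vecMul]
        rw [Matrix.add_vecMul, Matrix.smul_vecMul, Matrix.smul_vecMul, hw2,
          smul_zero, zero_add] at e1
        exact (smul_eq_zero.mp e1).resolve_left ht0
      have huV2 : u ᵥ* V2 = 0 := by
        have h5 : u ᵥ* (V2 * M ^ i) = 0 := by
          rw [← hx, ← Matrix.vecMul_vecMul, hxV2, Matrix.zero_vecMul]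
        have hinj := Matrix.vecMul_injective_iff_isUnit.mpr (hMu.pow i)
        apply hinj
        show (u ᵥ* V2) ᵥ* M ^ i = (0 : Fin (k + 1) → K) ᵥ* M ^ i
        rw [Matrix.vecMul_vecMul, h5, Matrix.zero_vecMul]
      apply hu0
      apply hB0 u
      rw [vecMul_B, pow_zero, mul_one, hu1, huV2]
      funext j
      cases j <;> rfl
    have hs : s = 0 := by
      rw [ht, zero_smul, add_zero] at hswx
      exact (smul_eq_zero.mp hswx).resolve_right hw0
    exact ⟨hs, ht⟩
  have hfam : LinearIndependent K
      (fun b : Fin 2 => (![(⟨v1, h1⟩ : ↥(spV V1 V2 M 0 ⊓ spV V1 V2 M i)), ⟨v2, h2⟩] b)) := by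
    apply LinearIndependent.of_comp (spV V1 V2 M 0 ⊓ spV V1 V2 M i).subtype
    have : ((spV V1 V2 M 0 ⊓ spV V1 V2 M i).subtype ∘
        fun b : Fin 2 => (![(⟨v1, h1⟩ : ↥(spV V1 V2 M 0 ⊓ spV V1 V2 M i)), ⟨v2, h2⟩] b))
        = ![v1, v2] := by
      funext b
      fin_cases b <;> rfl
    rw [this]
    exact hind
  simpa using hfam.fintype_card_le_finrank

theorem pow_lemma [Fintype K] (hk : 1 < k) (M : Matrix (Fin (k + 1)) (Fin (k + 1)) K)
    (horder : orderOf M = Fintype.card K ^ (k + 1) - 1) :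
    IsUnit M ∧ ∀ X : Matrix (Fin (k + 1)) (Fin (k + 1)) K,
      X ∈ Submodule.span K (Set.range fun n : ℕ => M ^ n) → X ≠ 0 → ∃ n, X = M ^ n := by
  classical
  have hq2 : 2 ≤ Fintype.card K := Fintype.one_lt_card
  have hqk : 8 ≤ Fintype.card K ^ (k + 1) := by
    calc (8 : ℕ) = 2 ^ 3 := by norm_num
    _ ≤ 2 ^ (k + 1) := Nat.pow_le_pow_right (by norm_num) (by omega)
    _ ≤ Fintype.card K ^ (k + 1) := Nat.pow_le_pow_left hq2 _
  set N := Fintype.card K ^ (k + 1) - 1 with hNdef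
  have hN : 7 ≤ N := by omega
  have hM1 : M ^ N = 1 := by rw [← horder]; exact pow_orderOf_eq_one M
  have hMu : IsUnit M := by
    apply IsUnit.of_mul_eq_one (M ^ (N - 1))
    calc M * M ^ (N - 1) = M ^ (N - 1 + 1) := (pow_succ' M (N - 1)).symm
    _ = 1 := by rw [show N - 1 + 1 = N from by omega, hM1]
  haveI : Nontrivial (Matrix (Fin (k + 1)) (Fin (k + 1)) K) :=
    ⟨1, 0, fun h => one_ne_zero (α := K) (by simpa using congrFun (congrFun h 0) 0)⟩
  have hch : M ^ (k + 1) = -∑ jj ∈ Finset.range (k + 1), M.charpoly.coeff jj • M ^ jj := by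
    have hnd : M.charpoly.natDegree = k + 1 := by
      rw [Matrix.charpoly_natDegree_eq_dim]
      simp
    have h0 : ∑ ii ∈ Finset.range (M.charpoly.natDegree + 1),
        M.charpoly.coeff ii • M ^ ii = 0 := by
      rw [← Polynomial.aeval_eq_sum_range]
      exact M.aeval_self_charpoly
    rw [hnd, Finset.sum_range_succ] at h0
    have hlead : M.charpoly.coeff (k + 1) = 1 := by
      have h := (Matrix.charpoly_monic M).coeff_natDegree
      rwa [hnd] at h
    rw [hlead, one_smul] at h0
    exact eq_neg_of_add_eq_zero_right h0
  set T := Submodule.span K (Set.range fun jj : Fin (k + 1) => M ^ (jj : ℕ)) with hT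
  have hpowT : ∀ n, M ^ n ∈ T := by
    intro n
    induction n using Nat.strong_induction_on with
    | _ n ih =>
      by_cases h : n < k + 1
      · exact Submodule.subset_span ⟨⟨n, h⟩, rfl⟩
      · have hsplit : M ^ n = M ^ (n - (k + 1)) * M ^ (k + 1) := by
          rw [← pow_add]
          congr 1
          omega
        rw [hsplit, hch, mul_neg, Finset.mul_sum]
        apply Submodule.neg_mem
        apply Submodule.sum_mem
        intro jj hjj
        rw [mul_smul_comm, ← pow_add]
        exact Submodule.smul_mem _ _ (ih _ (by
          have := Finset.mem_range.mp hjj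
          omega))
  set S := Submodule.span K (Set.range fun n : ℕ => M ^ n) with hS
  have hST : S ≤ T := Submodule.span_le.mpr (by rintro _ ⟨n, rfl⟩; exact hpowT n)
  have hTcard : finrank K ↥T ≤ k + 1 := by
    refine le_trans (finrank_span_le_card _) ?_
    rw [Set.toFinset_range]
    exact le_trans (Finset.card_image_le) (by simp)
  have hfr : finrank K ↥S ≤ k + 1 := le_trans (Submodule.finrank_mono hST) hTcard
  haveI : Fintype ↥S := Fintype.ofFinite _
  have hcard : Fintype.card ↥S = Fintype.card K ^ finrank K ↥S := card_eq_pow_finrank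
  have hmemS : ∀ n : ℕ, M ^ n ∈ S := fun n => Submodule.subset_span ⟨n, rfl⟩
  have hMn0 : ∀ n : ℕ, M ^ n ≠ 0 := fun n h => (hMu.pow n).ne_zero h
  set f : Fin (N + 1) → ↥S := fun a =>
    if h : (a : ℕ) < N then ⟨M ^ (a : ℕ), hmemS _⟩ else ⟨0, Submodule.zero_mem S⟩ with hf
  have hfinj : Function.Injective f := by
    intro a b hab
    simp only [hf] at hab
    by_cases ha : (a : ℕ) < N <;> by_cases hb : (b : ℕ) < N
    · rw [dif_pos ha, dif_pos hb, Subtype.mk_eq_mk] at hab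
      refine Fin.ext (pow_injOn_Iio_orderOf ?_ ?_ hab)
      · rw [Set.mem_Iio, horder]; exact ha
      · rw [Set.mem_Iio, horder]; exact hb
    · rw [dif_pos ha, dif_neg hb, Subtype.mk_eq_mk] at hab
      exact absurd hab (hMn0 _)
    · rw [dif_neg ha, dif_pos hb, Subtype.mk_eq_mk] at hab
      exact absurd hab.symm (hMn0 _)
    · refine Fin.ext ?_
      have h1 := a.isLt
      have h2 := b.isLt
      omega
  have hcard2 : N + 1 ≤ Fintype.card ↥S := by
    have := Fintype.card_le_of_injective f hfinj
    simpa using this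
  have hfr' : finrank K ↥S = k + 1 := by
    have h1 : Fintype.card K ^ (k + 1) ≤ Fintype.card K ^ finrank K ↥S := by
      rw [← hcard]
      omega
    have h2 : k + 1 ≤ finrank K ↥S := (Nat.pow_le_pow_iff_right (by omega)).mp h1
    omega
  have hbij : Function.Bijective f := by
    refine (Fintype.bijective_iff_injective_and_card f).mpr ⟨hfinj, ?_⟩
    rw [Fintype.card_fin, hcard, hfr']
    omega
  refine ⟨hMu, fun X hX hX0 => ?_⟩
  obtain ⟨a, ha⟩ := hbij.2 ⟨X, hX⟩
  simp only [hf] at ha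
  by_cases h : (a : ℕ) < N
  · rw [dif_pos h] at ha
    exact ⟨(a : ℕ), (Subtype.mk_eq_mk.mp ha).symm⟩
  · rw [dif_neg h] at ha
    exact absurd (Subtype.mk_eq_mk.mp ha).symm hX0

end Main

end StmtAux

open Matrix StmtAux in
/-- Let `M` be the companion matrix of a primitive polynomial of degree `k+1` over `F_q`, with
`k > 1`, and `V = rowspace(V_1 | V_2)` with `rk(V_1 | V_2) = k + 1`. The orbit code of `V`
under `G = ⟨diag(I_k, M)⟩` attains the maximum distance `2k` (all distinct pairs are at
distance `2k` and the stabilizer is trivial) if and only if `rk(V_1) = k` and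
`rk(V_2) = k + 1`. -/
theorem stmt17 {K : Type*} [Field K] [Fintype K] {q k : ℕ}
    (hq : Fintype.card K = q) (hk : 1 < k)
    (p : Polynomial K) (hmonic : p.Monic) (hdeg : p.natDegree = k + 1)
    (M : Matrix (Fin (k + 1)) (Fin (k + 1)) K) (hM : M = companion p)
    (horder : orderOf M = q ^ (k + 1) - 1)
    (V1 : Matrix (Fin (k + 1)) (Fin k) K) (V2 : Matrix (Fin (k + 1)) (Fin (k + 1)) K)
    (hrank : (Matrix.of fun i => Sum.elim (V1 i) (V2 i) :
        Matrix (Fin (k + 1)) (Fin k ⊕ Fin (k + 1)) K).rank = k + 1) :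
    ((∀ i j : ℕ, spV V1 V2 M i ≠ spV V1 V2 M j →
        dS (spV V1 V2 M i) (spV V1 V2 M j) = 2 * k) ∧
     (∀ i : ℕ, M ^ i ≠ 1 → spV V1 V2 M i ≠ spV V1 V2 M 0)) ↔
      (V1.rank = k ∧ V2.rank = k + 1) := by
  classical
  subst hq
  clear hM hmonic hdeg
  set N := Fintype.card K ^ (k + 1) - 1 with hNdef
  obtain ⟨hMu, hpowS⟩ := StmtAux.pow_lemma hk M horder
  have hq2 : 2 ≤ Fintype.card K := Fintype.one_lt_card
  have hqk : 8 ≤ Fintype.card K ^ (k + 1) := by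
    calc (8 : ℕ) = 2 ^ 3 := by norm_num
    _ ≤ 2 ^ (k + 1) := Nat.pow_le_pow_right (by norm_num) (by omega)
    _ ≤ Fintype.card K ^ (k + 1) := Nat.pow_le_pow_left hq2 _
  have hN7 : 7 ≤ N := by omega
  have hM1 : M ^ N = 1 := by rw [← horder]; exact pow_orderOf_eq_one M
  have hBeq : B V1 V2 M 0 = (Matrix.of fun i => Sum.elim (V1 i) (V2 i) :
      Matrix (Fin (k + 1)) (Fin k ⊕ Fin (k + 1)) K) := by
    ext r j
    cases j with
    | inl a => rfl
    | inr b => show (V2 * M ^ 0) r b = V2 r b; rw [pow_zero, mul_one]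
  have hB0 : ∀ x : Fin (k + 1) → K, x ᵥ* B V1 V2 M 0 = 0 → x = 0 :=
    vecMul_inj_of_rank (B V1 V2 M 0) (by rw [hBeq]; exact hrank)
  have hfr := finrank_spV V1 V2 M hB0 hMu
  have hsub : ∀ a b : ℕ, M ^ a ≠ M ^ b → IsUnit (M ^ a - M ^ b) := by
    intro a b hab
    obtain ⟨n, hn⟩ := hpowS (M ^ a - M ^ b)
      (Submodule.sub_mem _ (Submodule.subset_span ⟨a, rfl⟩)
        (Submodule.subset_span ⟨b, rfl⟩)) (sub_ne_zero.mpr hab)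
    exact hn ▸ hMu.pow n
  have hdims : ∀ i j : ℕ,
      finrank K ↥(spV V1 V2 M i ⊔ spV V1 V2 M j) +
        finrank K ↥(spV V1 V2 M i ⊓ spV V1 V2 M j) = 2 * k + 2 ∧
      finrank K ↥(spV V1 V2 M i ⊔ spV V1 V2 M j) ≤ 2 * k + 1 := by
    refine fun i j => ⟨?_, ?_⟩
    · rw [Submodule.finrank_sup_add_finrank_inf_eq, hfr i, hfr j]
      omega
    · calc finrank K ↥(spV V1 V2 M i ⊔ spV V1 V2 M j)
          ≤ finrank K (Fin k ⊕ Fin (k + 1) → K) := Submodule.finrank_le _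
      _ = 2 * k + 1 := finrank_amb
  have hM1ne : M ^ 1 ≠ 1 := by
    rw [pow_one]
    intro h
    rw [h, orderOf_one] at horder
    omega
  have hMne_pow : ∀ i : ℕ, 1 ≤ i → i < N → M ^ i ≠ 1 := by
    intro i h1 h2 hcon
    have h3 : i = 0 := pow_injOn_Iio_orderOf
      (by rw [Set.mem_Iio, horder]; exact h2)
      (by rw [Set.mem_Iio, horder]; omega)
      (by show M ^ i = M ^ 0; rw [hcon, pow_zero])
    omega
  have hr1le : V1.rank ≤ k := by
    have := Matrix.rank_le_card_width V1
    simpa using this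
  have hr2le : V2.rank ≤ k + 1 := by
    have := Matrix.rank_le_card_width V2
    simpa using this
  constructor
  · rintro ⟨hdist, hstab⟩
    have hone : ∀ i : ℕ, M ^ i ≠ 1 →
        finrank K ↥(spV V1 V2 M 0 ⊓ spV V1 V2 M i) = 1 := by
      intro i hi
      have hne : spV V1 V2 M 0 ≠ spV V1 V2 M i := Ne.symm (hstab i hi)
      have hd := hdist 0 i hne
      simp only [dS] at hd
      obtain ⟨hsum, hsup⟩ := hdims 0 i
      omega
    have hr2 : V2.rank = k + 1 := by
      by_contra hne2
      have h2 : V2.rank ≤ k := by omega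
      rcases h2.eq_or_lt with hrk2 | hlt
      · -- V2.rank = k : pigeonhole case
        have hUfr1 : 1 ≤ finrank K ↥(LinearMap.ker (V1ᵀ.mulVecLin)) := by
          have h1 := LinearMap.finrank_range_add_finrank_ker (V1ᵀ.mulVecLin)
          have h2' : finrank K ↥(LinearMap.range (V1ᵀ.mulVecLin)) = V1.rank := by
            rw [← rank_eq_finrank, Matrix.rank_transpose]
          have h3 : finrank K (Fin (k + 1) → K) = k + 1 := by simp
          rw [h2', h3] at h1
          omega
        obtain ⟨u, huU, hu0⟩ := Submodule.exists_mem_ne_zero_of_ne_bot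
          (p := LinearMap.ker (V1ᵀ.mulVecLin)) (by
            intro hbot
            rw [hbot] at hUfr1
            simp at hUfr1)
        have hu1 : u ᵥ* V1 = 0 := by
          rw [← Matrix.mulVec_transpose]
          exact LinearMap.mem_ker.mp huU
        have hWfr1 : 1 ≤ finrank K ↥(LinearMap.ker (V2ᵀ.mulVecLin)) := by
          have h1 := LinearMap.finrank_range_add_finrank_ker (V2ᵀ.mulVecLin)
          have h2' : finrank K ↥(LinearMap.range (V2ᵀ.mulVecLin)) = V2.rank := by
            rw [← rank_eq_finrank, Matrix.rank_transpose]
          have h3 : finrank K (Fin (k + 1) → K) = k + 1 := by simp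
          rw [h2', h3] at h1
          omega
        obtain ⟨w, hwW, hw0⟩ := Submodule.exists_mem_ne_zero_of_ne_bot
          (p := LinearMap.ker (V2ᵀ.mulVecLin)) (by
            intro hbot
            rw [hbot] at hWfr1
            simp at hWfr1)
        have hw2 : w ᵥ* V2 = 0 := by
          rw [← Matrix.mulVec_transpose]
          exact LinearMap.mem_ker.mp hwW
        have huV2 : u ᵥ* V2 ≠ 0 := by
          intro h0
          apply hu0
          apply hB0 u
          rw [vecMul_B, pow_zero, mul_one, hu1, h0]
          funext j
          cases j <;> rfl
        have hEex : ∀ i : ℕ, ∃ E : Matrix (Fin (k + 1)) (Fin (k + 1)) K,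
            (1 ≤ i ∧ i < N) → (∃ m, E = M ^ m) ∧ E * (M ^ i - 1) = M ^ i := by
          intro i
          by_cases hi : 1 ≤ i ∧ i < N
          · have hMi : M ^ i ≠ 1 := hMne_pow i hi.1 hi.2
            obtain ⟨n, hn⟩ := hpowS (M ^ i - 1)
              (Submodule.sub_mem _ (Submodule.subset_span ⟨i, rfl⟩)
                (Submodule.subset_span ⟨0, by simp⟩))
              (sub_ne_zero.mpr hMi)
            refine ⟨M ^ (i + n * (N - 1)), fun _ => ⟨⟨_, rfl⟩, ?_⟩⟩
            rw [hn, ← pow_add]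
            have harith : i + n * (N - 1) + n = i + n * N := by
              have h1 : n * (N - 1) + n = n * N := by
                rw [← Nat.mul_succ]
                congr 1
                omega
              omega
            rw [harith, pow_add, pow_mul', hM1, one_pow, mul_one]
          · exact ⟨0, fun h => absurd h hi⟩
        choose E hE using hEex
        set R := LinearMap.range (V2ᵀ.mulVecLin) with hRdef
        haveI : Fintype ↥(R : Set (Fin (k + 1) → K)) := Fintype.ofFinite _
        have hcardR : Fintype.card ↥(R : Set (Fin (k + 1) → K)) = Fintype.card K ^ k := by
          rw [card_eq_pow_finrank (K := K)]
          congr 1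
          show finrank K ↥R = k
          rw [hRdef, ← rank_eq_finrank, Matrix.rank_transpose, hrk2]
        have hexists : ∃ i : ℕ, (1 ≤ i ∧ i < N) ∧ ((u ᵥ* V2) ᵥ* E i) ∈ R := by
          by_contra hcon
          push_neg at hcon
          have hmaps : ∀ i ∈ Finset.Ico 1 N, ((u ᵥ* V2) ᵥ* E i) ∈
              Finset.univ \ (R : Set (Fin (k + 1) → K)).toFinset := by
            intro i hi
            rw [Finset.mem_sdiff, Set.mem_toFinset]
            obtain ⟨h1, h2⟩ := Finset.mem_Ico.mp hi
            exact ⟨Finset.mem_univ _, hcon i ⟨h1, h2⟩⟩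
          have hcard_lt : (Finset.univ \ (R : Set (Fin (k + 1) → K)).toFinset).card <
              (Finset.Ico 1 N).card := by
            rw [Finset.card_sdiff_of_subset (Finset.subset_univ _), Finset.card_univ,
              Set.toFinset_card, hcardR, Nat.card_Ico]
            have hcf : Fintype.card (Fin (k + 1) → K) = Fintype.card K ^ (k + 1) := by
              rw [Fintype.card_fun]
              simp
            rw [hcf]
            have h4 : 4 ≤ Fintype.card K ^ k := by
              calc (4 : ℕ) = 2 ^ 2 := by norm_num
              _ ≤ 2 ^ k := Nat.pow_le_pow_right (by norm_num) (by omega)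
              _ ≤ Fintype.card K ^ k := Nat.pow_le_pow_left hq2 _
            have h5 : Fintype.card K ^ k ≤ Fintype.card K ^ (k + 1) :=
              Nat.pow_le_pow_right (by omega) (by omega)
            omega
          obtain ⟨i, hi, j, hj, hij, hcij⟩ :=
            Finset.exists_ne_map_eq_of_card_lt_of_maps_to hcard_lt hmaps
          obtain ⟨hi1, hi2⟩ := Finset.mem_Ico.mp hi
          obtain ⟨hj1, hj2⟩ := Finset.mem_Ico.mp hj
          obtain ⟨⟨mi, hEi⟩, hEimul⟩ := hE i ⟨hi1, hi2⟩
          obtain ⟨⟨mj, hEj⟩, hEjmul⟩ := hE j ⟨hj1, hj2⟩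
          have hMij : M ^ i ≠ M ^ j := by
            intro h
            apply hij
            exact pow_injOn_Iio_orderOf
              (by rw [Set.mem_Iio, horder]; exact hi2)
              (by rw [Set.mem_Iio, horder]; exact hj2) h
          by_cases hEE : E i = E j
          · have hFi : E i * M ^ i = M ^ i + E i := by
              have h := hEimul
              rw [mul_sub, mul_one] at h
              exact sub_eq_iff_eq_add.mp h
            have hFj : E i * M ^ j = M ^ j + E i := by
              have h := hEjmul
              rw [← hEE] at h
              rw [mul_sub, mul_one] at h
              exact sub_eq_iff_eq_add.mp h
            have h5 : (1 - E i) * (M ^ i - M ^ j) = 0 := by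
              rw [sub_mul, one_mul, mul_sub, hFi, hFj]
              abel
            have h6 : IsUnit (1 - E i) := by
              apply IsUnit.of_mul_eq_one (1 - M ^ i)
              rw [sub_mul, one_mul, mul_sub, mul_one, hFi]
              abel
            have h7 : M ^ i - M ^ j = 0 := h6.mul_left_cancel (by rw [h5, mul_zero])
            exact hMij (sub_eq_zero.mp h7)
          · have hEij : IsUnit (E i - E j) := by
              rw [hEi, hEj]
              apply hsub
              rw [← hEi, ← hEj]
              exact hEE
            have h7 : (u ᵥ* V2) ᵥ* (E i - E j) = 0 := by
              rw [Matrix.vecMul_sub, hcij, sub_self]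
            have hinj := Matrix.vecMul_injective_iff_isUnit.mpr hEij
            apply huV2
            apply hinj
            show (u ᵥ* V2) ᵥ* (E i - E j) = (0 : Fin (k + 1) → K) ᵥ* (E i - E j)
            rw [h7, Matrix.zero_vecMul]
        obtain ⟨i, ⟨hi1, hi2⟩, hciR⟩ := hexists
        obtain ⟨⟨mi, hEi⟩, hEimul⟩ := hE i ⟨hi1, hi2⟩
        obtain ⟨t, ht⟩ := hciR
        have htV2 : t ᵥ* V2 = (u ᵥ* V2) ᵥ* E i := by
          rw [← Matrix.mulVec_transpose, ← Matrix.mulVecLin_apply]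
          exact ht
        have hxeq : t ᵥ* (V2 * (M ^ i - 1)) = u ᵥ* (V2 * M ^ i) := by
          rw [← Matrix.vecMul_vecMul, htV2, Matrix.vecMul_vecMul, hEimul,
            Matrix.vecMul_vecMul]
        have hMi1 : M ^ i ≠ 1 := hMne_pow i hi1 hi2
        have h2le := lowerB V1 V2 M hB0 hMu u w t hu1 hu0 hw2 hw0 hxeq
        rw [hone i hMi1] at h2le
        omega
      · have hl := lowerW V1 V2 M hB0 1
        rw [hone 1 hM1ne] at hl
        omega
    have hr1 : V1.rank = k := by
      have hV2u : IsUnit V2 := isUnit_of_rank_eq V2 hr2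
      have hDu : IsUnit (M ^ 1 - 1) := by
        have h := hsub 1 0 (by rw [pow_zero]; exact hM1ne)
        rwa [pow_zero] at h
      have hl := lowerU V1 V2 M hB0 hMu hV2u hDu
      rw [hone 1 hM1ne] at hl
      omega
    exact ⟨hr1, hr2⟩
  · rintro ⟨hr1, hr2⟩
    have hV2u : IsUnit V2 := isUnit_of_rank_eq V2 hr2
    have hmain : ∀ i j : ℕ, M ^ i ≠ M ^ j →
        finrank K ↥(spV V1 V2 M i ⊓ spV V1 V2 M j) = 1 := by
      intro i j hij
      have hup := upper V1 V2 M hB0 hMu hr1 hV2u (hsub j i (Ne.symm hij))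
      obtain ⟨hsum, hsup⟩ := hdims i j
      omega
    constructor
    · intro i j hne
      have hij : M ^ i ≠ M ^ j := by
        intro h
        apply hne
        simp only [spV, h]
      have h1 := hmain i j hij
      obtain ⟨hsum, hsup⟩ := hdims i j
      simp only [dS]
      omega
    · intro i hi heq
      have h1 := hmain i 0 (by rwa [pow_zero])
      rw [heq, inf_idem, hfr 0] at h1
      omega
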